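/- Let A be a KV-algebra over a field F of characteristic zero, W and V KV-bimodules of A. Form the semidirect product KV-algebra G = A ⊕ W with multiplication (a,w)(a',w') := (aa', aw' + wa'), and regard V as a KV-bimodule of G via (a,w)·v := av and v·(a,w) := va. For p + q = k, say that a k-linear map f : G^k → V has bidegree (p,q) if f(ξ_1,…,ξ_k) = 0 whenever every argument ξ_i lies in A ⊕ {0} or in {0} ⊕ W and the number of arguments lying in {0} ⊕ W is different from p. Then for every k-cochain f of bidegree (p,q), the KV coboundary δf is a (k+1)-cochain of bidegree (p, q+1). -/
import Mathlib

/-- The KV coboundary operator, defined on raw `q`-cochains (here `q = n+1 ≥ 1`). -/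
def kvδ {A W : Type*} [AddCommGroup A] [AddCommGroup W]
    (mul : A → A → A) (l : A → W → W) (r : W → A → W) (n : ℕ)
    (f : (Fin (n + 1) → A) → W) : (Fin (n + 2) → A) → W :=
  fun v =>
    ∑ j : Fin (n + 1),
      (-1 : ℤ) ^ (j.val + 1) •
        (l (v j.castSucc) (f fun i => v (j.castSucc.succAbove i))
          - ∑ k : Fin (n + 1),
              f (Function.update (fun i => v (j.castSucc.succAbove i)) k
                  (mul (v j.castSucc) (v (j.castSucc.succAbove k))))
          + r (f (Function.update (fun i => v (j.castSucc.succAbove i)) (Fin.last n)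
                  (v j.castSucc)))
              (v (Fin.last (n + 1))))

/-- A `k`-cochain on `G = A ⊕ W` with values in `V` has bidegree `(p, k−p)` if it
vanishes on every tuple all of whose arguments lie in `A ⊕ {0}` or in `{0} ⊕ W`
and in which the number of arguments lying in `{0} ⊕ W` differs from `p`. -/
def hasBidegree {A W V : Type*} [Zero A] [Zero W] [Zero V] {k : ℕ}
    (p : ℕ) (f : (Fin k → A × W) → V) : Prop :=
  ∀ v : Fin k → A × W,
    (∀ i, (v i).2 = 0 ∨ (v i).1 = 0) →
    Nat.card {i : Fin k // (v i).1 = 0} ≠ p → f v = 0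

open scoped Classical in
/-- The number of `W`-type arguments in a tuple. -/
noncomputable def kvCnt {A W : Type*} [Zero A] {k : ℕ} (v : Fin k → A × W) : ℕ :=
  ∑ i, if (v i).1 = 0 then 1 else 0

open scoped Classical in
lemma kvCnt_eq_natcard {A W : Type*} [Zero A] {k : ℕ} (v : Fin k → A × W) :
    Nat.card {i : Fin k // (v i).1 = 0} = kvCnt v := by
  rw [Nat.card_eq_fintype_card, Fintype.card_subtype, kvCnt, Finset.card_filter]

open scoped Classical in
lemma kvCnt_succAbove {A W : Type*} [Zero A] {k : ℕ} (v : Fin (k + 1) → A × W)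
    (p : Fin (k + 1)) :
    kvCnt v = (if (v p).1 = 0 then 1 else 0) + kvCnt (fun i => v (p.succAbove i)) := by
  rw [kvCnt, Fin.sum_univ_succAbove (fun i => if (v i).1 = 0 then 1 else 0) p]; rfl

open scoped Classical in
lemma kvCnt_update {A W : Type*} [Zero A] {k : ℕ} (u : Fin k → A × W) (j : Fin k)
    (x : A × W) :
    kvCnt (Function.update u j x) + (if (u j).1 = 0 then 1 else 0)
      = kvCnt u + (if x.1 = 0 then 1 else 0) := by
  unfold kvCnt
  have h1 : (∑ i, if ((Function.update u j x) i).1 = 0 then 1 else 0)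
      = ∑ i, Function.update (fun i => if (u i).1 = 0 then (1:ℕ) else 0) j
          (if x.1 = 0 then 1 else 0) i := by
    apply Finset.sum_congr rfl
    intro i _
    by_cases h : i = j
    · subst h; simp
    · simp [Function.update_of_ne h]
  rw [h1, Finset.sum_update_of_mem (Finset.mem_univ j),
    ← Finset.add_sum_erase _ _ (Finset.mem_univ j), Finset.erase_eq]
  ring

lemma kv_succAbove_last {n : ℕ} (j : Fin (n + 1)) :
    j.castSucc.succAbove (Fin.last n) = Fin.last (n + 1) := by
  rw [Fin.succAbove_of_le_castSucc, Fin.succ_last]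
  simp [Fin.le_def, Fin.is_le j]

/-- on the semidirect product `G = A ⊕ W`, with `V` a KV-bimodule of `G`
via `(a,w)·v = av`, `v·(a,w) = va`, the KV coboundary sends every `k`-cochain of
bidegree `(p,q)` (with `p + q = k`, here `k = n + 1`) to a `(k+1)`-cochain of
bidegree `(p, q+1)`. -/
theorem kv_coboundary_preserves_bidegree
    {F : Type*} [Field F] [CharZero F]
    {A : Type*} [AddCommGroup A] [Module F A]
    {W : Type*} [AddCommGroup W] [Module F W]
    {V : Type*} [AddCommGroup V] [Module F V]
    (mul : A →ₗ[F] A →ₗ[F] A)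
    (hA : ∀ a b c : A, mul (mul a b) c - mul a (mul b c)
        = mul (mul b a) c - mul b (mul a c))
    (lW : A →ₗ[F] W →ₗ[F] W) (rW : W →ₗ[F] A →ₗ[F] W)
    (hW1 : ∀ (a b : A) (w : W), lW (mul a b) w - lW a (lW b w)
        = lW (mul b a) w - lW b (lW a w))
    (hW2 : ∀ (a : A) (w : W) (b : A), rW (lW a w) b - lW a (rW w b)
        = rW (rW w a) b - rW w (mul a b))
    (lV : A →ₗ[F] V →ₗ[F] V) (rV : V →ₗ[F] A →ₗ[F] V)
    (hV1 : ∀ (a b : A) (v : V), lV (mul a b) v - lV a (lV b v)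
        = lV (mul b a) v - lV b (lV a v))
    (hV2 : ∀ (a : A) (v : V) (b : A), rV (lV a v) b - lV a (rV v b)
        = rV (rV v a) b - rV v (mul a b))
    (n p q : ℕ) (hpq : p + q = n + 1)
    (f : MultilinearMap F (fun _ : Fin (n + 1) => A × W) V)
    (hf : hasBidegree p ⇑f) :
    hasBidegree p
      (kvδ (fun x y => (mul x.1 y.1, lW x.1 y.2 + rW x.2 y.1))
        (fun x v => lV x.1 v) (fun v x => rV v x.1) n ⇑f) := by
  classical
  intro v hv hc
  rw [kvCnt_eq_natcard] at hc
  unfold kvδ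
  apply Finset.sum_eq_zero
  intro j _
  set ξ : A × W := v j.castSucc with hξdef
  set u : Fin (n + 1) → A × W := fun i => v (j.castSucc.succAbove i) with hudef
  have hpure_u : ∀ i, (u i).2 = 0 ∨ (u i).1 = 0 := fun i => hv _
  have hcv : kvCnt v = (if ξ.1 = 0 then 1 else 0) + kvCnt u :=
    kvCnt_succAbove v j.castSucc
  -- piece 1
  have h1 : lV ξ.1 (f u) = 0 := by
    by_cases h : ξ.1 = 0
    · rw [h]; simp
    · have hfu : f u = 0 := by
        apply hf u hpure_u
        rw [kvCnt_eq_natcard]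
        intro hp
        apply hc
        rw [hcv, if_neg h, Nat.zero_add]; exact hp
      rw [hfu]; simp
  -- piece 2
  have h2 : ∀ k : Fin (n + 1),
      f (Function.update u k
        (mul ξ.1 (u k).1, lW ξ.1 (u k).2 + rW ξ.2 (u k).1)) = 0 := by
    intro k
    set P : A × W := (mul ξ.1 (u k).1, lW ξ.1 (u k).2 + rW ξ.2 (u k).1) with hP
    have hzero : P = 0 → f (Function.update u k P) = 0 := by
      intro h; rw [h]; exact f.map_update_zero u k
    have hcount : P.1 = 0 →
        (if ξ.1 = 0 then (1:ℕ) else 0) + (if (u k).1 = 0 then (1:ℕ) else 0) = 1 →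
        f (Function.update u k P) = 0 := by
      intro hP1 hind
      apply hf
      · intro i
        rcases eq_or_ne i k with h | h
        · subst h; rw [Function.update_self]; exact Or.inr hP1
        · rw [Function.update_of_ne h]; exact hpure_u i
      · rw [kvCnt_eq_natcard]
        intro hp
        apply hc
        have hup := kvCnt_update u k P
        rw [if_pos hP1] at hup
        rw [hcv]
        revert hind hup hp
        generalize (if ξ.1 = 0 then (1:ℕ) else 0) = a
        generalize (if (u k).1 = 0 then (1:ℕ) else 0) = b
        intros; omega
    by_cases hξ1 : ξ.1 = 0
    · by_cases hη1 : (u k).1 = 0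
      · apply hzero
        simp [hP, hξ1, hη1, Prod.mk_eq_zero]
      · apply hcount
        · simp [hP, hξ1]
        · rw [if_pos hξ1, if_neg hη1]
    · have hξ2 : ξ.2 = 0 := (hv j.castSucc).resolve_right hξ1
      by_cases hη1 : (u k).1 = 0
      · apply hcount
        · simp [hP, hη1]
        · rw [if_neg hξ1, if_pos hη1]
      · have hη2 : (u k).2 = 0 := (hpure_u k).resolve_right hη1
        by_cases hm : mul ξ.1 (u k).1 = 0
        · apply hzero
          simp [hP, hξ2, hη2, hm, Prod.mk_eq_zero]
        · apply hf
          · intro i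
            rcases eq_or_ne i k with h | h
            · subst h; rw [Function.update_self]
              left
              simp [hP, hξ2, hη2]
            · rw [Function.update_of_ne h]; exact hpure_u i
          · rw [kvCnt_eq_natcard]
            intro hp
            apply hc
            have hup := kvCnt_update u k P
            rw [if_neg hη1, if_neg (show ¬P.1 = 0 from hm)] at hup
            rw [hcv, if_neg hξ1]
            omega
  -- piece 3
  have hulast : u (Fin.last n) = v (Fin.last (n + 1)) := by
    show v (j.castSucc.succAbove (Fin.last n)) = _
    rw [kv_succAbove_last]
  have h3 : rV (f (Function.update u (Fin.last n) ξ)) (v (Fin.last (n + 1))).1 = 0 := by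
    by_cases hL : (v (Fin.last (n + 1))).1 = 0
    · rw [hL]; simp
    · have hfT : f (Function.update u (Fin.last n) ξ) = 0 := by
        apply hf
        · intro i
          rcases eq_or_ne i (Fin.last n) with h | h
          · subst h; rw [Function.update_self]; exact hv j.castSucc
          · rw [Function.update_of_ne h]; exact hpure_u i
        · rw [kvCnt_eq_natcard]
          intro hp
          apply hc
          have hup := kvCnt_update u (Fin.last n) ξ
          rw [hulast, if_neg hL] at hup
          rw [hcv]
          revert hup hp
          generalize (if ξ.1 = 0 then (1:ℕ) else 0) = a
          intros; omega
      rw [hfT]; simp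
  have hu' : ∀ i, v (j.castSucc.succAbove i) = u i := fun _ => rfl
  beta_reduce
  simp only [hu']
  rw [Finset.sum_eq_zero fun k _ => h2 k, h1, h3]
  simp
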